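/- Let β : ℕ → ℝ_{>0} with β₀ = 1, and let M_z be the (bounded) weighted shift M_z e_k = (β_{k+1}/β_k) e_{k+1} on ℓ²(ℕ) with weights w_k = β_{k+1}/β_k, and set γ_k = β_k². Then M_z is a q-isometry (i.e. Σ_{s=0}^q (−1)^s C(q,s) (M_z*)^s M_z^s = 0) if and only if there is a polynomial S of degree at most q−1 with γ_k = S(k) for all k ∈ ℕ. -/

import Mathlib

open fwdDiff Polynomial Finset

lemma iter_zero (n : ℕ) : Δ_[(1:ℕ)] ^[n] (0 : ℕ → ℝ) = 0 := by
  induction n with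
  | zero => rfl
  | succ n ih => rw [Function.iterate_succ_apply, show Δ_[(1:ℕ)] (0:ℕ→ℝ) = 0 from funext fun _ => sub_self _, ih]

lemma poly_diff_zero : ∀ (q : ℕ) (S : ℝ[X]), S.natDegree < q →
    Δ_[(1:ℕ)] ^[q] (fun n : ℕ => S.eval (n : ℝ)) = 0 := by
  intro q
  induction q with
  | zero => intro S h; omega
  | succ q ih =>
    intro S hS
    have hdiff : Δ_[(1:ℕ)] (fun n : ℕ => S.eval (n : ℝ))
        = fun n : ℕ => (S.comp (X + C 1) - S).eval (n : ℝ) := by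
      funext n
      simp [fwdDiff, Polynomial.eval_comp]
    rw [Function.iterate_succ_apply, hdiff]
    rcases eq_or_ne S.natDegree 0 with h0 | h0
    · obtain ⟨c, rfl⟩ := Polynomial.natDegree_eq_zero.mp h0
      have : ((C c).comp (X + C 1) - C c : ℝ[X]) = 0 := by simp
      rw [this]
      simp only [Polynomial.eval_zero]
      exact iter_zero q
    · have hq : 0 < q := by omega
      apply ih
      have hXC : (X + C 1 : ℝ[X]).natDegree = 1 := by
        simpa using Polynomial.natDegree_X_add_C (1:ℝ)
      have hndeg : (S.comp (X + C 1)).natDegree = S.natDegree := by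
        rw [Polynomial.natDegree_comp, hXC, mul_one]
      have hne : S.comp (X + C 1) ≠ 0 := by
        intro h
        rw [h, Polynomial.natDegree_zero] at hndeg
        exact h0 hndeg.symm
      have hSne : S ≠ 0 := fun h => h0 (by simp [h])
      have hdeg : (S.comp (X + C 1)).degree = S.degree := by
        rw [Polynomial.degree_eq_natDegree hne, Polynomial.degree_eq_natDegree hSne, hndeg]
      have hlc : (S.comp (X + C 1)).leadingCoeff = S.leadingCoeff := by
        rw [Polynomial.leadingCoeff_comp (by rw [hXC]; omega)]
        have : (X + C 1 : ℝ[X]).leadingCoeff = 1 := by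
          simpa using Polynomial.leadingCoeff_X_add_C (1:ℝ)
        rw [this, one_pow, mul_one]
      have hlt := Polynomial.degree_sub_lt hdeg hne hlc
      rw [hdeg] at hlt
      rcases eq_or_ne (S.comp (X + C 1) - S) 0 with hz | hz
      · rw [hz]; simpa using hq
      · have := Polynomial.natDegree_lt_natDegree hz hlt
        omega

lemma diff_zero_poly (q : ℕ) (hq : 1 ≤ q) (γ : ℕ → ℝ) (hγ : ∀ k, Δ_[(1:ℕ)] ^[q] γ k = 0) :
    ∃ S : ℝ[X], S.natDegree ≤ q - 1 ∧ ∀ k : ℕ, γ k = S.eval (k : ℝ) := by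
  have hzero : ∀ j, q ≤ j → Δ_[(1:ℕ)] ^[j] γ 0 = 0 := by
    intro j hj
    have hfq : Δ_[(1:ℕ)] ^[q] γ = 0 := funext hγ
    have : Δ_[(1:ℕ)] ^[j] γ = Δ_[(1:ℕ)] ^[j - q] (Δ_[(1:ℕ)] ^[q] γ) := by
      rw [← Function.iterate_add_apply]
      congr 1
      omega
    rw [this, hfq, iter_zero]
    rfl
  refine ⟨∑ j ∈ range q, C (Δ_[(1:ℕ)] ^[j] γ 0 / j.factorial) * descPochhammer ℝ j, ?_, ?_⟩
  · apply natDegree_sum_le_of_forall_le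
    intro j hj
    calc (C (Δ_[(1:ℕ)] ^[j] γ 0 / j.factorial) * descPochhammer ℝ j).natDegree
        ≤ (descPochhammer ℝ j).natDegree := Polynomial.natDegree_C_mul_le _ _
      _ = j := descPochhammer_natDegree ℝ j
      _ ≤ q - 1 := by have := Finset.mem_range.mp hj; omega
  · intro k
    have heval : Polynomial.eval (k : ℝ)
        (∑ j ∈ range q, C (Δ_[(1:ℕ)] ^[j] γ 0 / j.factorial) * descPochhammer ℝ j)
        = ∑ j ∈ range q, (k.choose j : ℝ) * Δ_[(1:ℕ)] ^[j] γ 0 := by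
      rw [Polynomial.eval_finset_sum]
      refine Finset.sum_congr rfl fun j _ => ?_
      rw [Polynomial.eval_mul, Polynomial.eval_C, descPochhammer_eval_eq_descFactorial,
        Nat.descFactorial_eq_factorial_mul_choose]
      have : (j.factorial : ℝ) ≠ 0 := by positivity
      push_cast
      field_simp
    rw [heval]
    have newton := shift_eq_sum_fwdDiff_iter (1:ℕ) γ k 0
    simp only [zero_add, smul_eq_mul, mul_one] at newton
    have hγk : γ k = ∑ j ∈ range (k + 1), (k.choose j : ℝ) * Δ_[(1:ℕ)] ^[j] γ 0 := by
      rw [newton]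
      exact Finset.sum_congr rfl fun j _ => by rw [nsmul_eq_mul]
    rw [hγk]
    set N := max q (k + 1) with hN
    rw [show ∑ j ∈ range (k+1), (k.choose j : ℝ) * Δ_[(1:ℕ)] ^[j] γ 0
        = ∑ j ∈ range N, (k.choose j : ℝ) * Δ_[(1:ℕ)] ^[j] γ 0 from
      Finset.sum_subset (Finset.range_subset_range.mpr (le_max_right _ _)) (fun j _ hj => by
        rw [Nat.choose_eq_zero_of_lt (by simpa using hj), Nat.cast_zero, zero_mul])]
    exact (Finset.sum_subset (Finset.range_subset_range.mpr (le_max_left _ _)) (fun j _ hj => by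
      rw [hzero j (by simpa using hj), mul_zero])).symm

lemma sum_eq_diff (q : ℕ) (γ : ℕ → ℝ) (k : ℕ) :
    ∑ s ∈ range (q+1), ((-1:ℝ)^s * (q.choose s : ℝ)) * γ (k+s)
      = (-1:ℝ)^q * Δ_[(1:ℕ)] ^[q] γ k := by
  rw [fwdDiff_iter_eq_sum_shift, Finset.mul_sum]
  refine Finset.sum_congr rfl fun s hs => ?_
  have hs' : s ≤ q := by simpa [Nat.lt_succ_iff] using hs
  have hsgn : (-1:ℝ)^(q-s) = (-1:ℝ)^q * (-1:ℝ)^s := by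
    have : (-1:ℝ)^q = (-1:ℝ)^(q-s) * (-1:ℝ)^s := by
      rw [← pow_add]; congr 1; omega
    rw [this, mul_assoc, ← pow_add]
    have : (-1:ℝ)^(s+s) = 1 := by
      rw [← two_mul, pow_mul]; norm_num
    rw [this, mul_one]
  rw [zsmul_eq_mul]
  push_cast
  rw [hsgn]
  have : k + s • 1 = k + s := by simp
  rw [this]
  have h2 : (-1:ℝ)^(q*2) = 1 := by
    rw [mul_comm q 2, pow_mul]; norm_num
  ring_nf
  rw [h2, mul_one]

theorem stmt11 {H : Type*} [NormedAddCommGroup H] [InnerProductSpace ℂ H] [CompleteSpace H]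
    (e : ℕ → H) (he : Orthonormal ℂ e)
    (hdense : ⊤ ≤ (Submodule.span ℂ (Set.range e)).topologicalClosure)
    (β : ℕ → ℝ) (hβ : ∀ k, 0 < β k) (hβ0 : β 0 = 1)
    (M : H →L[ℂ] H)
    (hM : ∀ k, M (e k) = ((β (k + 1) / β k : ℝ) : ℂ) • e (k + 1))
    (q : ℕ) (hq : 1 ≤ q) :
    (∑ s ∈ Finset.range (q + 1), ((-1 : ℝ) ^ s * (q.choose s : ℝ)) •
        ((ContinuousLinearMap.adjoint M) ^ s * M ^ s) = 0) ↔
    ∃ S : Polynomial ℝ, S.natDegree ≤ q - 1 ∧ ∀ k : ℕ, (β k) ^ 2 = S.eval (k : ℝ) := by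
  have hβne : ∀ k, (β k : ℝ) ≠ 0 := fun k => (hβ k).ne'
  -- action of powers of M on basis vectors
  have hMpow : ∀ s k, (M ^ s) (e k) = ((β (k + s) / β k : ℝ) : ℂ) • e (k + s) := by
    intro s
    induction s with
    | zero =>
      intro k
      simp [hβne k]
    | succ s ih =>
      intro k
      rw [pow_succ, ContinuousLinearMap.mul_apply, hM, map_smul, ih (k + 1), smul_smul,
        ← Complex.ofReal_mul, show k + 1 + s = k + (s + 1) from by omega]
      congr 2
      rw [div_mul_div_comm, mul_comm (β (k + 1)) (β (k + (s + 1)))]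
      rw [mul_div_assoc, mul_comm (β k) (β (k + 1)), ← div_div, div_self (hβne (k + 1))]
      rw [one_div] at *
      field_simp
  have hinner : ∀ a b : ℕ, (inner ℂ (e a) (e b) : ℂ) = if a = b then 1 else 0 :=
    orthonormal_iff_ite.mp he
  have hMM : ∀ s j k : ℕ, (inner ℂ ((M ^ s) (e j)) ((M ^ s) (e k)) : ℂ)
      = if j = k then ((β (j + s) / β j : ℝ)^2 : ℝ) else 0 := by
    intro s j k
    rw [hMpow, hMpow, inner_smul_left, inner_smul_right, hinner, Complex.conj_ofReal]
    by_cases h : j = k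
    · subst h
      simp [pow_two]
    · rw [if_neg (by omega), if_neg h]
      simp
  have hadj : ∀ (s : ℕ) (x y : H),
      (inner ℂ (((ContinuousLinearMap.adjoint M) ^ s) x) y : ℂ) = inner ℂ x ((M ^ s) y) := by
    intro s
    induction s with
    | zero => intro x y; simp
    | succ s ih =>
      intro x y
      rw [pow_succ, ContinuousLinearMap.mul_apply, ih,
        ContinuousLinearMap.adjoint_inner_left, pow_succ', ContinuousLinearMap.mul_apply]
  -- inner products of T applied to basis vectors
  set T := ∑ s ∈ Finset.range (q + 1), ((-1 : ℝ) ^ s * (q.choose s : ℝ)) •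
      ((ContinuousLinearMap.adjoint M) ^ s * M ^ s) with hT
  have hTinner : ∀ j k : ℕ, (inner ℂ (T (e j)) (e k) : ℂ)
      = if j = k then ((∑ s ∈ Finset.range (q + 1),
          ((-1 : ℝ) ^ s * (q.choose s : ℝ)) * (β (j + s) / β j)^2 : ℝ) : ℂ) else 0 := by
    intro j k
    rw [hT, ContinuousLinearMap.sum_apply, sum_inner]
    have : ∀ s ∈ Finset.range (q + 1),
        (inner ℂ ((((-1 : ℝ) ^ s * (q.choose s : ℝ)) •
          ((ContinuousLinearMap.adjoint M) ^ s * M ^ s)) (e j)) (e k) : ℂ)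
        = (((-1 : ℝ) ^ s * (q.choose s : ℝ) : ℝ) : ℂ) *
            (if j = k then ((β (j + s) / β j : ℝ)^2 : ℝ) else 0) := by
      intro s _
      rw [ContinuousLinearMap.smul_apply, RCLike.real_smul_eq_coe_smul (K := ℂ),
        inner_smul_left, RCLike.conj_ofReal, ContinuousLinearMap.mul_apply, hadj, hMM]
      norm_cast
    rw [Finset.sum_congr rfl this]
    by_cases h : j = k
    · subst h
      simp only [if_pos rfl]
      push_cast
      ring
    · simp [h]
  -- x orthogonal to all e j implies x = 0
  have horto : ∀ x : H, (∀ j, (inner ℂ (e j) x : ℂ) = 0) → x = 0 := by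
    intro x hx
    have hKtop : (Submodule.span ℂ (Set.range e)).topologicalClosure = ⊤ :=
      le_antisymm le_top hdense
    have hbot := Submodule.topologicalClosure_eq_top_iff.mp hKtop
    have hxmem : x ∈ (Submodule.span ℂ (Set.range e))ᗮ := by
      rw [Submodule.mem_orthogonal]
      intro u hu
      induction hu using Submodule.span_induction with
      | mem u hu => obtain ⟨j, rfl⟩ := hu; exact hx j
      | zero => simp
      | add u v _ _ h1 h2 => rw [inner_add_left, h1, h2, add_zero]
      | smul c u _ h1 => rw [inner_smul_left, h1, mul_zero]
    rw [hbot] at hxmem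
    exact hxmem
  constructor
  · -- forward direction
    intro h0
    have hPk : ∀ k : ℕ, ∑ s ∈ Finset.range (q + 1),
        ((-1 : ℝ) ^ s * (q.choose s : ℝ)) * (β (k + s))^2 = 0 := by
      intro k
      have hik := hTinner k k
      rw [h0] at hik
      simp only [ContinuousLinearMap.zero_apply, inner_zero_left, eq_self_iff_true,
        if_true] at hik
      have hsum : ∑ s ∈ Finset.range (q + 1),
          ((-1 : ℝ) ^ s * (q.choose s : ℝ)) * (β (k + s) / β k)^2 = 0 :=
        Complex.ofReal_eq_zero.mp hik.symm
      have := congrArg (fun t => t * (β k)^2) hsum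
      simp only [zero_mul, Finset.sum_mul] at this
      rw [← this]
      refine Finset.sum_congr rfl fun s _ => ?_
      rw [div_pow]
      have hb : (β k)^2 ≠ 0 := pow_ne_zero 2 (hβne k)
      field_simp
      rw [mul_div_assoc, div_self (hβne k), mul_one]
    -- turn into vanishing q-th difference and build polynomial
    have hdiff : ∀ k, Δ_[(1:ℕ)] ^[q] (fun n : ℕ => (β n)^2) k = 0 := by
      intro k
      have hsd := sum_eq_diff q (fun n => (β n)^2) k
      rw [hPk k] at hsd
      have hne : ((-1:ℝ))^q ≠ 0 := pow_ne_zero _ (by norm_num)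
      exact (mul_eq_zero.mp hsd.symm).resolve_left hne
    obtain ⟨S, h1, h2⟩ := diff_zero_poly q hq (fun n => (β n)^2) hdiff
    exact ⟨S, h1, h2⟩
  · -- backward direction
    rintro ⟨S, hS, hSeval⟩
    have hdiff := poly_diff_zero q S (by omega)
    have hPk : ∀ k : ℕ, ∑ s ∈ Finset.range (q + 1),
        ((-1 : ℝ) ^ s * (q.choose s : ℝ)) * (β (k + s))^2 = 0 := by
      intro k
      have h1 : (fun n : ℕ => (β n)^2) = fun n : ℕ => S.eval (n : ℝ) := funext hSeval
      have hsd := sum_eq_diff q (fun n => (β n)^2) k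
      rw [hsd, h1, hdiff]
      simp
    have hTe : ∀ j, T (e j) = 0 := by
      intro j
      apply horto
      intro i
      rw [← inner_conj_symm, hTinner]
      by_cases h : j = i
      · subst h
        rw [if_pos rfl]
        have hk : ∑ s ∈ Finset.range (q + 1),
            ((-1 : ℝ) ^ s * (q.choose s : ℝ)) * (β (j + s) / β j)^2 = 0 := by
          have := hPk j
          have h2 := congrArg (fun t => t / (β j)^2) this
          simp only [zero_div, Finset.sum_div] at h2
          rw [← h2]
          refine Finset.sum_congr rfl fun s _ => ?_
          field_simp
        rw [hk]
        simp
      · rw [if_neg h]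
        simp
    have hker : Submodule.span ℂ (Set.range e) ≤ LinearMap.ker T :=
      Submodule.span_le.mpr (by rintro _ ⟨j, rfl⟩; exact hTe j)
    have hcl := Submodule.topologicalClosure_minimal _ hker (isClosed_singleton.preimage T.continuous)
    have := le_trans hdense hcl
    ext x
    exact this Submodule.mem_top
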